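/- Let T be a linear transformation on the space Mₙ(ℂ) of n × n complex matrices such that T maps every rank-one matrix to a rank-one matrix and T is invertible. Then there exist invertible matrices A, B ∈ Mₙ(ℂ) such that either T(X) = A X B for all X, or T(X) = A Xᵀ B for all X. -/

import Mathlib

open Matrix

namespace MM

variable {n : ℕ}

abbrev V (n : ℕ) := Fin n → ℂ
abbrev Mat (n : ℕ) := Matrix (Fin n) (Fin n) ℂ

lemma vv_smul_left (c : ℂ) (x y : V n) :
    vecMulVec (c • x) y = c • vecMulVec x y := by
  ext i j; simp [vecMulVec_apply, mul_assoc]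

lemma vv_smul_right (c : ℂ) (x y : V n) :
    vecMulVec x (c • y) = c • vecMulVec x y := by
  ext i j; simp [vecMulVec_apply]; ring

lemma vv_add_right (x a b : V n) :
    vecMulVec x (a + b) = vecMulVec x a + vecMulVec x b := by
  ext i j; simp [vecMulVec_apply]; ring

lemma vv_add_left (a b y : V n) :
    vecMulVec (a + b) y = vecMulVec a y + vecMulVec b y := by
  ext i j; simp [vecMulVec_apply]; ring

lemma vv_zero_left (y : V n) : vecMulVec (0 : V n) y = 0 := by
  ext i j; simp [vecMulVec_apply]

lemma vv_zero_right (x : V n) : vecMulVec x (0 : V n) = 0 := by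
  ext i j; simp [vecMulVec_apply]

lemma vv_ne_zero {x y : V n} (hx : x ≠ 0) (hy : y ≠ 0) :
    vecMulVec x y ≠ 0 := by
  obtain ⟨i, hi⟩ := Function.ne_iff.1 hx
  obtain ⟨j, hj⟩ := Function.ne_iff.1 hy
  intro h
  have := congrFun (congrFun h i) j
  simp [vecMulVec_apply] at this
  tauto

lemma vv_right_eq_zero {x y : V n} (hx : x ≠ 0) (h : vecMulVec x y = 0) : y = 0 := by
  by_contra hy; exact vv_ne_zero hx hy h

lemma vv_left_eq_zero {x y : V n} (hy : y ≠ 0) (h : vecMulVec x y = 0) : x = 0 := by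
  by_contra hx; exact vv_ne_zero hx hy h

lemma vv_cancel_right {x x' y : V n} (hy : y ≠ 0)
    (h : vecMulVec x y = vecMulVec x' y) : x = x' := by
  obtain ⟨j, hj⟩ := Function.ne_iff.1 hy
  funext i
  have := congrFun (congrFun h i) j
  simp only [vecMulVec_apply] at this
  exact mul_right_cancel₀ (by simpa using hj) this

lemma vv_cancel_left {x y y' : V n} (hx : x ≠ 0)
    (h : vecMulVec x y = vecMulVec x y') : y = y' := by
  obtain ⟨i, hi⟩ := Function.ne_iff.1 hx
  funext j
  have := congrFun (congrFun h i) j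
  simp only [vecMulVec_apply] at this
  exact mul_left_cancel₀ (by simpa using hi) this

lemma vv_mulVec (x y z : V n) :
    (vecMulVec x y).mulVec z = (y ⬝ᵥ z) • x := by
  funext i
  simp [mulVec, dotProduct, vecMulVec_apply, Finset.mul_sum, Finset.sum_mul]
  congr 1; funext j; ring

/-- rank of `vecMulVec x y` is 1 when both are nonzero -/
lemma rank_vv {x y : V n} (hx : x ≠ 0) (hy : y ≠ 0) :
    (vecMulVec x y).rank = 1 := by
  have hrange : LinearMap.range (vecMulVec x y).mulVecLin = Submodule.span ℂ {x} := by
    apply le_antisymm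
    · rintro _ ⟨z, rfl⟩
      rw [mulVecLin_apply, vv_mulVec]
      exact Submodule.smul_mem _ _ (Submodule.mem_span_singleton_self x)
    · rw [Submodule.span_singleton_le_iff_mem]
      obtain ⟨j, hj⟩ := Function.ne_iff.1 hy
      set z : V n := (y j)⁻¹ • (Pi.single j 1 : V n) with hz
      refine ⟨z, ?_⟩
      rw [mulVecLin_apply, vv_mulVec]
      have : y ⬝ᵥ z = 1 := by
        simp only [hz, dotProduct, Pi.smul_apply, Pi.single_apply, smul_eq_mul]
        rw [Finset.sum_eq_single j] <;> simp_all
      rw [this, one_smul]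
  rw [Matrix.rank, hrange, finrank_span_singleton hx]

/-- a rank-one matrix is a `vecMulVec` of nonzero vectors -/
lemma rank_one_decomp {M : Mat n} (h : M.rank = 1) :
    ∃ x y : V n, x ≠ 0 ∧ y ≠ 0 ∧ M = vecMulVec x y := by
  have hM : M ≠ 0 := by rintro rfl; simp at h
  have : ∃ i j, M i j ≠ 0 := by
    by_contra hc; push_neg at hc
    exact hM (by ext i j; simp [hc])
  obtain ⟨i₀, j₀, hij⟩ := this
  set x : V n := fun i => M i j₀ with hxdef
  have hx : x ≠ 0 := fun h0 => hij (by simpa [hxdef] using congrFun h0 i₀)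
  have hcol : ∀ j, M.mulVec (Pi.single j 1) = fun i => M i j := by
    intro j; funext i; simp [mulVec, dotProduct, Pi.single_apply]
  have hxmem : x ∈ LinearMap.range M.mulVecLin := ⟨Pi.single j₀ 1, by
    rw [mulVecLin_apply, hcol]⟩
  have hspan : Submodule.span ℂ {x} = LinearMap.range M.mulVecLin := by
    apply Submodule.eq_of_le_of_finrank_le
    · rwa [Submodule.span_singleton_le_iff_mem]
    · rw [show Module.finrank ℂ (LinearMap.range M.mulVecLin) = 1 from h,
        finrank_span_singleton hx]
  have hcolspan : ∀ j : Fin n, ∃ c : ℂ, (fun i => M i j) = c • x := by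
    intro j
    have : (fun i => M i j) ∈ Submodule.span ℂ {x} := by
      rw [hspan]; exact ⟨Pi.single j 1, by rw [mulVecLin_apply, hcol]⟩
    obtain ⟨c, hc⟩ := Submodule.mem_span_singleton.1 this
    exact ⟨c, hc.symm⟩
  choose y hy using hcolspan
  refine ⟨x, y, hx, ?_, ?_⟩
  · intro h0
    have := congrFun (hy j₀) i₀
    simp only [hxdef] at this
    rw [congrFun h0 j₀] at this
    simp at this
    exact hij this
  · ext i j
    have := congrFun (hy j) i
    simp only [Pi.smul_apply, smul_eq_mul] at this
    rw [vecMulVec_apply, this]; ring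


/-- non-proportional: x' is not a multiple of x -/
def NP (x x' : V n) : Prop := ∀ c : ℂ, x' ≠ c • x

lemma NP.ne_zero {x x' : V n} (h : NP x x') : x' ≠ 0 := by
  simpa using h 0

lemma pair_indep {x x' : V n} (hx : x ≠ 0) (h : NP x x') {a b : ℂ}
    (hab : a • x + b • x' = 0) : a = 0 ∧ b = 0 := by
  by_cases hb : b = 0
  · subst hb
    simp only [zero_smul, add_zero, smul_eq_zero] at hab
    exact ⟨hab.resolve_right hx, rfl⟩
  · exfalso
    apply h (-(a/b))
    funext i
    have := congrFun hab i
    simp only [Pi.add_apply, Pi.smul_apply, smul_eq_mul, Pi.zero_apply] at this ⊢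
    field_simp
    linear_combination this

/-- if two nonzero vectors are not non-proportional, they're proportional with
nonzero constant -/
lemma not_NP {x x' : V n} (hx' : x' ≠ 0) (h : ¬ NP x x') :
    ∃ c : ℂ, c ≠ 0 ∧ x' = c • x := by
  simp only [NP, not_forall, not_ne_iff] at h
  obtain ⟨c, hc⟩ := h
  refine ⟨c, fun h0 => hx' (by simp [hc, h0]), hc⟩

/-- equal nonzero vecMulVec's have proportional factors -/
lemma vv_eq_prop {p q r s : V n} (hp : p ≠ 0) (hq : q ≠ 0)
    (h : vecMulVec p q = vecMulVec r s) :
    ∃ α : ℂ, α ≠ 0 ∧ r = α • p ∧ q = α • s := by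
  obtain ⟨i, hi⟩ := Function.ne_iff.1 hp
  obtain ⟨j, hj⟩ := Function.ne_iff.1 hq
  have hij := congrFun (congrFun h i) j
  simp only [vecMulVec_apply] at hij
  have hpi : p i ≠ 0 := by simpa using hi
  have hqj : q j ≠ 0 := by simpa using hj
  have hsj : s j ≠ 0 := fun h0 => by simp [h0] at hij; tauto
  have hri : r i ≠ 0 := fun h0 => by simp [h0] at hij; tauto
  refine ⟨q j / s j, div_ne_zero hqj hsj, ?_, ?_⟩
  · funext k
    have := congrFun (congrFun h k) j
    simp only [vecMulVec_apply] at this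
    simp only [Pi.smul_apply, smul_eq_mul]
    rw [div_mul_eq_mul_div, eq_div_iff hsj]
    linear_combination -this
  · funext k
    have := congrFun (congrFun h i) k
    simp only [vecMulVec_apply] at this
    simp only [Pi.smul_apply, smul_eq_mul]
    have h2 : p i * (q k * s j) = p i * (q j * s k) := by
      linear_combination s j * this - s k * hij
    have h3 := mul_left_cancel₀ hpi h2
    rw [div_mul_eq_mul_div, eq_div_iff hsj]
    linear_combination h3
lemma sum_not_vv {x₁ x₂ y₁ y₂ p q : V n}
    (hx₁ : x₁ ≠ 0) (hx : NP x₁ x₂) (hy₁ : y₁ ≠ 0) (hy : NP y₁ y₂)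
    (h : vecMulVec x₁ y₁ + vecMulVec x₂ y₂ = vecMulVec p q) : False := by
  obtain ⟨j₀, hj₀⟩ := Function.ne_iff.1 hy₁
  have hj₀' : y₁ j₀ ≠ 0 := by simpa using hj₀
  have hcol : ∀ j, y₁ j • x₁ + y₂ j • x₂ = q j • p := by
    intro j
    funext i
    have := congrFun (congrFun h i) j
    simp only [Matrix.add_apply, vecMulVec_apply] at this
    simp only [Pi.add_apply, Pi.smul_apply, smul_eq_mul]
    linear_combination this
  have hq₀ : q j₀ ≠ 0 := by
    intro h0
    have := hcol j₀
    rw [h0, zero_smul] at this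
    exact hj₀' (pair_indep hx₁ hx this).1
  have hcoef : ∀ j, q j₀ * y₁ j = q j * y₁ j₀ ∧ q j₀ * y₂ j = q j * y₂ j₀ := by
    intro j
    have h1 := hcol j
    have h0 := hcol j₀
    have h2 : (q j₀ * y₁ j - q j * y₁ j₀) • x₁ + (q j₀ * y₂ j - q j * y₂ j₀) • x₂ = 0 := by
      funext i
      have hi1 := congrFun h1 i
      have hi0 := congrFun h0 i
      simp only [Pi.add_apply, Pi.smul_apply, smul_eq_mul, Pi.zero_apply] at hi1 hi0 ⊢
      linear_combination q j₀ * hi1 - q j * hi0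
    obtain ⟨e1, e2⟩ := pair_indep hx₁ hx h2
    exact ⟨by linear_combination e1, by linear_combination e2⟩
  apply hy (y₂ j₀ / y₁ j₀)
  funext j
  obtain ⟨e1, e2⟩ := hcoef j
  simp only [Pi.smul_apply, smul_eq_mul]
  rw [div_mul_eq_mul_div, eq_div_iff hj₀']
  have h4 : q j₀ * (y₂ j * y₁ j₀) = q j₀ * (y₂ j₀ * y₁ j) := by
    linear_combination y₁ j₀ * e2 - y₂ j₀ * e1
  exact mul_left_cancel₀ hq₀ h4

/-- `a ↦ vecMulVec x a` as a linear map -/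
def vvL (x : V n) : V n →ₗ[ℂ] Mat n where
  toFun a := vecMulVec x a
  map_add' a b := by ext i j; simp [vecMulVec_apply]; ring
  map_smul' c a := by ext i j; simp [vecMulVec_apply]; ring

@[simp] lemma vvL_apply (x a : V n) : vvL x a = vecMulVec x a := rfl

/-- transpose as a linear map -/
def τ : Mat n →ₗ[ℂ] Mat n where
  toFun := Matrix.transpose
  map_add' a b := by ext i j; simp
  map_smul' c a := by ext i j; simp

@[simp] lemma τ_apply (X : Mat n) : τ X = Xᵀ := rfl

lemma vv_transpose (x y : V n) : (vecMulVec x y)ᵀ = vecMulVec y x := by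
  ext i j; simp [vecMulVec_apply, mul_comm]

/-- extract the right factor as a linear map, given a fixed nonzero left factor -/
lemma extract_right {u : V n} (hu : u ≠ 0) (S : V n →ₗ[ℂ] Mat n)
    (h : ∀ a, ∃ c, S a = vecMulVec u c) :
    ∃ F : V n →ₗ[ℂ] V n, ∀ a, S a = vecMulVec u (F a) := by
  obtain ⟨i₀, hi₀⟩ := Function.ne_iff.1 hu
  have hi₀' : u i₀ ≠ 0 := by simpa using hi₀
  refine ⟨{ toFun := fun a j => S a i₀ j / u i₀
            map_add' := by intro a b; funext j; simp [Matrix.add_apply]; ring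
            map_smul' := by intro c a; funext j; simp [Matrix.smul_apply]; ring }, ?_⟩
  intro a
  obtain ⟨c, hc⟩ := h a
  rw [hc]
  ext i j
  simp only [vecMulVec_apply, LinearMap.coe_mk, AddHom.coe_mk, hc, vecMulVec_apply]
  field_simp

/-- extract the left factor as a linear map, given a fixed nonzero right factor -/
lemma extract_left {v : V n} (hv : v ≠ 0) (S : V n →ₗ[ℂ] Mat n)
    (h : ∀ a, ∃ c, S a = vecMulVec c v) :
    ∃ F : V n →ₗ[ℂ] V n, ∀ a, S a = vecMulVec (F a) v := by
  obtain ⟨j₀, hj₀⟩ := Function.ne_iff.1 hv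
  have hj₀' : v j₀ ≠ 0 := by simpa using hj₀
  refine ⟨{ toFun := fun a i => S a i j₀ / v j₀
            map_add' := by intro a b; funext i; simp [Matrix.add_apply]; ring
            map_smul' := by intro c a; funext i; simp [Matrix.smul_apply]; ring }, ?_⟩
  intro a
  obtain ⟨c, hc⟩ := h a
  rw [hc]
  ext i j
  simp only [vecMulVec_apply, LinearMap.coe_mk, AddHom.coe_mk, hc, vecMulVec_apply]
  field_simp

end MM

open Matrix
namespace MM2
open MM
variable {n : ℕ}

section TLemmas
variable {T : Mat n →ₗ[ℂ] Mat n}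

lemma step0' (hr : ∀ X : Mat n, X.rank = 1 → (T X).rank = 1)
    {x a : V n} (hx : x ≠ 0) (ha : a ≠ 0) :
    ∃ p q : V n, p ≠ 0 ∧ q ≠ 0 ∧ T (vecMulVec x a) = vecMulVec p q := by
  obtain ⟨p, q, hp, hq, h⟩ := rank_one_decomp (hr _ (rank_vv hx ha))
  exact ⟨p, q, hp, hq, h⟩

lemma step0 (hr : ∀ X : Mat n, X.rank = 1 → (T X).rank = 1)
    (x a : V n) : ∃ p q : V n, T (vecMulVec x a) = vecMulVec p q := by
  by_cases hx : x = 0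
  · exact ⟨0, 0, by simp [hx, vv_zero_left]⟩
  by_cases ha : a = 0
  · exact ⟨0, 0, by simp [ha, vv_zero_right, vv_zero_left]⟩
  obtain ⟨p, q, _, _, h⟩ := step0' hr hx ha
  exact ⟨p, q, h⟩

lemma Tvv_ne_zero (hinj : Function.Injective T) {x a : V n}
    (hx : x ≠ 0) (ha : a ≠ 0) : T (vecMulVec x a) ≠ 0 := by
  intro h0
  have := hinj (a₁ := vecMulVec x a) (a₂ := 0) (by simpa using h0)
  exact vv_ne_zero hx ha this

lemma lemB (hn : 0 < n) (hinj : Function.Injective T)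
    (hr : ∀ X : Mat n, X.rank = 1 → (T X).rank = 1) {x : V n} (hx : x ≠ 0) :
    (∃ u : V n, u ≠ 0 ∧ ∀ a, ∃ c, T (vecMulVec x a) = vecMulVec u c) ∨
    (∃ v : V n, v ≠ 0 ∧ ∀ a, ∃ c, T (vecMulVec x a) = vecMulVec c v) := by
  by_contra hcon
  push_neg at hcon
  obtain ⟨hL, hR⟩ := hcon
  set e : V n := Pi.single ⟨0, hn⟩ 1 with he
  have he0 : e ≠ 0 := by
    intro h0
    have := congrFun h0 ⟨0, hn⟩
    simp [he] at this
  obtain ⟨x₀, y₀, hx₀, hy₀, hM0⟩ := step0' hr hx he0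
  obtain ⟨a₁, ha₁⟩ := hL x₀ hx₀
  have ha₁0 : a₁ ≠ 0 := by
    rintro rfl
    exact ha₁ 0 (by simp [vv_zero_right, vv_zero_left])
  obtain ⟨p₁, q₁, hp₁, hq₁, h1⟩ := step0' hr hx ha₁0
  have hNPx : NP x₀ p₁ := by
    intro c hc
    exact ha₁ (c • q₁) (by rw [h1, hc, vv_smul_left, ← vv_smul_right])
  obtain ⟨a₂, ha₂⟩ := hR y₀ hy₀
  have ha₂0 : a₂ ≠ 0 := by
    rintro rfl
    exact ha₂ 0 (by simp [vv_zero_right, vv_zero_left])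
  obtain ⟨p₂, q₂, hp₂, hq₂, h2⟩ := step0' hr hx ha₂0
  have hNPy : NP y₀ q₂ := by
    intro c hc
    exact ha₂ (c • p₂) (by rw [h2, hc, vv_smul_right, ← vv_smul_left])
  -- q₁ is proportional to y₀
  obtain ⟨ps, qs, hsum⟩ := step0 hr x (e + a₁)
  rw [vv_add_right, map_add, hM0, h1] at hsum
  have hq₁y₀ : ¬ NP y₀ q₁ := fun hNP => sum_not_vv hx₀ hNPx hy₀ hNP hsum
  obtain ⟨c₁, hc₁0, hc₁⟩ := not_NP hq₁ hq₁y₀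
  -- p₂ is proportional to x₀
  obtain ⟨ps', qs', hsum'⟩ := step0 hr x (e + a₂)
  rw [vv_add_right, map_add, hM0, h2] at hsum'
  have hp₂x₀ : ¬ NP x₀ p₂ := by
    intro hNP
    exact sum_not_vv hx₀ hNP hy₀ hNPy hsum'
  obtain ⟨c₂, hc₂0, hc₂⟩ := not_NP hp₂ hp₂x₀
  -- final contradiction
  obtain ⟨ps'', qs'', hsum''⟩ := step0 hr x (a₁ + a₂)
  rw [vv_add_right, map_add, h1, h2] at hsum''
  have hNPp : NP p₁ p₂ := by
    intro c hc
    have hc0 : c ≠ 0 := by rintro rfl; rw [zero_smul] at hc; exact hp₂ hc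
    apply hNPx (c₂ / c)
    funext i
    have h5 := congrFun hc i
    have h6 := congrFun hc₂ i
    simp only [Pi.smul_apply, smul_eq_mul] at h5 h6 ⊢
    rw [div_mul_eq_mul_div, eq_div_iff hc0]
    linear_combination h6 - h5
  have hNPq : NP q₁ q₂ := by
    intro c hc
    rw [hc₁, smul_smul] at hc
    exact hNPy (c * c₁) hc
  exact sum_not_vv hp₁ hNPp hq₁ hNPq hsum''

lemma notBoth (hn : 2 ≤ n) (hinj : Function.Injective T) {x : V n} (hx : x ≠ 0)
    (h1 : ∃ u : V n, u ≠ 0 ∧ ∀ a, ∃ c, T (vecMulVec x a) = vecMulVec u c)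
    (h2 : ∃ v : V n, v ≠ 0 ∧ ∀ a, ∃ c, T (vecMulVec x a) = vecMulVec c v) :
    False := by
  obtain ⟨u, hu, hU⟩ := h1
  obtain ⟨v, hv, hV⟩ := h2
  have hn0 : 0 < n := by omega
  set i0 : Fin n := ⟨0, hn0⟩ with hi0
  set i1 : Fin n := ⟨1, hn⟩ with hi1
  have hne : i0 ≠ i1 := by simp [hi0, hi1, Fin.ext_iff]
  set e0 : V n := Pi.single i0 1 with he0
  set e1 : V n := Pi.single i1 1 with he1
  have he00 : e0 ≠ 0 := by
    intro h0; have := congrFun h0 i0; simp [he0] at this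
  have he10 : e1 ≠ 0 := by
    intro h0; have := congrFun h0 i1; simp [he1] at this
  -- T (vv x e) is a multiple of vv u v for e = e0, e1
  have key : ∀ e : V n, e ≠ 0 → ∃ α : ℂ, α ≠ 0 ∧
      T (vecMulVec x e) = α • vecMulVec u v := by
    intro e he
    obtain ⟨c, hc⟩ := hU e
    obtain ⟨c', hc'⟩ := hV e
    have hTe : T (vecMulVec x e) ≠ 0 := Tvv_ne_zero hinj hx he
    have hc0 : c ≠ 0 := by rintro rfl; rw [vv_zero_right] at hc; exact hTe hc
    obtain ⟨α, hα0, hα1, hα2⟩ := vv_eq_prop hu hc0 (hc.symm.trans hc')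
    refine ⟨α, hα0, ?_⟩
    rw [hc', hα1, vv_smul_left]
  obtain ⟨α, hα, hTα⟩ := key e0 he00
  obtain ⟨β, hβ, hTβ⟩ := key e1 he10
  have hzero : T (vecMulVec x (β • e0 - α • e1)) = 0 := by
    have : vecMulVec x (β • e0 - α • e1)
        = β • vecMulVec x e0 - α • vecMulVec x e1 := by
      ext i j
      simp [vecMulVec_apply, Matrix.sub_apply]
      ring
    rw [this, map_sub, _root_.map_smul, _root_.map_smul, hTα, hTβ, smul_smul, smul_smul,
      mul_comm, sub_self]
  have := hinj (a₁ := vecMulVec x (β • e0 - α • e1)) (a₂ := 0)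
    (by simpa using hzero)
  have h7 : β • e0 - α • e1 = 0 := by
    by_contra hne'
    exact vv_ne_zero hx hne' this
  have h8 := congrFun h7 i1
  simp only [Pi.sub_apply, Pi.smul_apply, he0, he1, Pi.single_apply, Pi.zero_apply,
    smul_eq_mul] at h8
  rw [if_neg (show i1 ≠ i0 by simp [hi0, hi1, Fin.ext_iff])] at h8
  simp at h8
  exact hα h8
end TLemmas
end MM2
section Stage6
namespace MM
variable {n : ℕ}

/-- `a ↦ vecMulVec a y` as a linear map -/
def vvR (y : V n) : V n →ₗ[ℂ] Mat n where
  toFun a := vecMulVec a y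
  map_add' a b := by ext i j; simp [vecMulVec_apply]; ring
  map_smul' c a := by ext i j; simp [vecMulVec_apply]; ring

@[simp] lemma vvR_apply (y a : V n) : vvR y a = vecMulVec a y := rfl

lemma NP_map {F : V n →ₗ[ℂ] V n} (hF : Function.Injective F) {x x' : V n}
    (h : NP x x') : NP (F x) (F x') := by
  intro c hc
  apply h c
  apply hF
  rw [LinearMap.map_smul]
  exact hc

lemma smul_cancel {N : Mat n} (hN : N ≠ 0) {a b : ℂ} (h : a • N = b • N) :
    a = b := by
  have : (a - b) • N = 0 := by rw [sub_smul, h, sub_self]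
  rcases smul_eq_zero.1 this with h'|h'
  · exact sub_eq_zero.1 h'
  · exact absurd h' hN

lemma submodule_cover {K₁ K₂ : Submodule ℂ (V n)} (h : ∀ y, y ∈ K₁ ∨ y ∈ K₂) :
    (∀ y, y ∈ K₁) ∨ (∀ y, y ∈ K₂) := by
  by_cases h1 : ∀ y, y ∈ K₁
  · exact Or.inl h1
  push_neg at h1
  obtain ⟨a, ha⟩ := h1
  have haK₂ : a ∈ K₂ := (h a).resolve_left ha
  right
  intro y
  rcases h y with hy | hy
  · rcases h (a + y) with hay | hay
    · exact absurd (by simpa using K₁.sub_mem hay hy) ha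
    · simpa using K₂.sub_mem hay haK₂
  · exact hy

lemma vv_conj (P Q : Mat n) (x y : V n) :
    vecMulVec (P.mulVec x) (Q.mulVec y) = P * vecMulVec x y * Qᵀ := by
  ext i j
  have lhs_eq : vecMulVec (P.mulVec x) (Q.mulVec y) i j
      = ∑ l, ∑ k, P i k * x k * (Q j l * y l) := by
    simp only [vecMulVec_apply, mulVec, dotProduct, Finset.sum_mul, Finset.mul_sum]
  have rhs_eq : (P * vecMulVec x y * Qᵀ) i j
      = ∑ l, ∑ k, P i k * (x k * y l) * Q j l := by
    simp only [Matrix.mul_apply, vecMulVec_apply, Matrix.transpose_apply,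
      Finset.sum_mul]
  rw [lhs_eq, rhs_eq]
  apply Finset.sum_congr rfl; intro l _
  apply Finset.sum_congr rfl; intro k _
  ring

lemma const_first {T : Mat n →ₗ[ℂ] Mat n} {F G : V n →ₗ[ℂ] V n}
    (hF : Function.Injective F) (hG : Function.Injective G)
    (μ : V n → V n → ℂ)
    (hμ : ∀ x y, T (vecMulVec x y) = μ x y • vecMulVec (F x) (G y))
    {x x' y : V n} (hx : x ≠ 0) (hx' : x' ≠ 0) (hy : y ≠ 0) :
    μ x y = μ x' y := by
  have hGy : G y ≠ 0 := fun h0 => hy (hG (by rw [h0, map_zero]))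
  have hFx : F x ≠ 0 := fun h0 => hx (hF (by rw [h0, map_zero]))
  have hFx' : F x' ≠ 0 := fun h0 => hx' (hF (by rw [h0, map_zero]))
  obtain ⟨j₀, hj₀⟩ := Function.ne_iff.1 hGy
  have hj₀' : G y j₀ ≠ 0 := by simpa using hj₀
  by_cases hNP : NP x x'
  · -- independent case
    have hsum : T (vecMulVec (x + x') y)
        = T (vecMulVec x y) + T (vecMulVec x' y) := by
      rw [vv_add_left, map_add]
    rw [hμ, hμ, hμ, map_add] at hsum
    have hvec : ((μ (x+x') y - μ x y) * G y j₀) • F x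
        + ((μ (x+x') y - μ x' y) * G y j₀) • F x' = 0 := by
      funext i
      have hi := congrFun (congrFun hsum i) j₀
      simp only [Matrix.add_apply, Matrix.smul_apply, vecMulVec_apply,
        LinearMap.map_add, Pi.add_apply, smul_eq_mul] at hi
      simp only [Pi.add_apply, Pi.smul_apply, Pi.zero_apply, smul_eq_mul]
      linear_combination hi
    obtain ⟨e1, e2⟩ := pair_indep hFx (NP_map hF hNP) hvec
    have q1 : μ (x+x') y = μ x y :=
      sub_eq_zero.1 ((mul_eq_zero.1 e1).resolve_right hj₀')
    have q2 : μ (x+x') y = μ x' y :=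
      sub_eq_zero.1 ((mul_eq_zero.1 e2).resolve_right hj₀')
    rw [← q1, q2]
  · -- proportional case
    obtain ⟨c, hc0, hc⟩ := not_NP hx' hNP
    have h1 : T (vecMulVec x' y) = (c * μ x y) • vecMulVec (F x) (G y) := by
      rw [hc, vv_smul_left, LinearMap.map_smul, hμ, smul_smul]
    have h2 : T (vecMulVec x' y) = (μ x' y * c) • vecMulVec (F x) (G y) := by
      rw [hμ x' y, show F x' = c • F x by rw [hc, LinearMap.map_smul],
        vv_smul_left, smul_smul]
    have hN : vecMulVec (F x) (G y) ≠ 0 := vv_ne_zero hFx hGy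
    have h3 := smul_cancel hN (h1.symm.trans h2)
    have h4 : c * μ x y = c * μ x' y := by linear_combination h3
    exact mul_left_cancel₀ hc0 h4
end MM
end Stage6
namespace MM
variable {n : ℕ}

def LT (T : Mat n →ₗ[ℂ] Mat n) (x : V n) : Prop :=
  ∃ u : V n, u ≠ 0 ∧ ∀ a, ∃ c, T (vecMulVec x a) = vecMulVec u c

def RT (T : Mat n →ₗ[ℂ] Mat n) (x : V n) : Prop :=
  ∃ v : V n, v ≠ 0 ∧ ∀ a, ∃ c, T (vecMulVec x a) = vecMulVec c v

variable {T : Mat n →ₗ[ℂ] Mat n}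

lemma Tt_inj (hinj : Function.Injective T) :
    Function.Injective (τ ∘ₗ T ∘ₗ τ : Mat n →ₗ[ℂ] Mat n) := by
  intro X Y h
  simp only [LinearMap.comp_apply, τ_apply] at h
  have := hinj (Matrix.transpose_injective h)
  exact Matrix.transpose_injective this

lemma Tt_rank (hr : ∀ X : Mat n, X.rank = 1 → (T X).rank = 1) :
    ∀ X : Mat n, X.rank = 1 → ((τ ∘ₗ T ∘ₗ τ : Mat n →ₗ[ℂ] Mat n) X).rank = 1 := by
  intro X hX
  simp only [LinearMap.comp_apply, τ_apply]
  rw [Matrix.rank_transpose]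
  exact hr _ (by rw [Matrix.rank_transpose]; exact hX)

lemma rowType (hn : 0 < n) (hinj : Function.Injective T)
    (hr : ∀ X : Mat n, X.rank = 1 → (T X).rank = 1) {y : V n} (hy : y ≠ 0) :
    (∃ w : V n, w ≠ 0 ∧ ∀ b, ∃ c, T (vecMulVec b y) = vecMulVec c w) ∨
    (∃ w : V n, w ≠ 0 ∧ ∀ b, ∃ c, T (vecMulVec b y) = vecMulVec w c) := by
  rcases MM2.lemB hn (Tt_inj hinj) (Tt_rank hr) hy with ⟨w, hw, hB⟩ | ⟨w, hw, hB⟩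
  · left
    refine ⟨w, hw, fun b => ?_⟩
    obtain ⟨c, hc⟩ := hB b
    simp only [LinearMap.comp_apply, τ_apply, vv_transpose] at hc
    refine ⟨c, ?_⟩
    have := congrArg Matrix.transpose hc
    rwa [Matrix.transpose_transpose, vv_transpose] at this
  · right
    refine ⟨w, hw, fun b => ?_⟩
    obtain ⟨c, hc⟩ := hB b
    simp only [LinearMap.comp_apply, τ_apply, vv_transpose] at hc
    refine ⟨c, ?_⟩
    have := congrArg Matrix.transpose hc
    rwa [Matrix.transpose_transpose, vv_transpose] at this

lemma consistency (hn : 2 ≤ n) (hinj : Function.Injective T)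
    (hr : ∀ X : Mat n, X.rank = 1 → (T X).rank = 1)
    {x₁ x₂ : V n} (hx₁ : x₁ ≠ 0) (hx₂ : x₂ ≠ 0)
    (h1 : LT T x₁) (h2 : RT T x₂) : False := by
  have hn0 : 0 < n := by omega
  obtain ⟨u₁, hu₁, hU⟩ := h1
  obtain ⟨v₂, hv₂, hV⟩ := h2
  by_cases hNP : NP x₁ x₂
  swap
  · obtain ⟨c, hc0, hc⟩ := not_NP hx₂ hNP
    refine MM2.notBoth hn hinj hx₂ ⟨u₁, hu₁, fun a => ?_⟩ ⟨v₂, hv₂, hV⟩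
    obtain ⟨c', hc'⟩ := hU a
    exact ⟨c • c', by
      rw [hc, vv_smul_left, LinearMap.map_smul, hc', ← vv_smul_right]⟩
  · set K₁ : Submodule ℂ (V n) :=
      { carrier := {y | ∃ c, T (vecMulVec x₂ y) = vecMulVec u₁ c}
        add_mem' := by
          rintro y y' ⟨c, hc⟩ ⟨c', hc'⟩
          exact ⟨c + c', by rw [vv_add_right, map_add, hc, hc', vv_add_right]⟩
        zero_mem' := ⟨0, by rw [vv_zero_right, map_zero, vv_zero_right]⟩
        smul_mem' := by
          rintro r y ⟨c, hc⟩
          exact ⟨r • c, by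
            rw [vv_smul_right, LinearMap.map_smul, hc, vv_smul_right]⟩ } with hK₁
    set K₂ : Submodule ℂ (V n) :=
      { carrier := {y | ∃ c, T (vecMulVec x₁ y) = vecMulVec c v₂}
        add_mem' := by
          rintro y y' ⟨c, hc⟩ ⟨c', hc'⟩
          exact ⟨c + c', by rw [vv_add_right, map_add, hc, hc', vv_add_left]⟩
        zero_mem' := ⟨0, by rw [vv_zero_right, map_zero, vv_zero_left]⟩
        smul_mem' := by
          rintro r y ⟨c, hc⟩
          exact ⟨r • c, by
            rw [vv_smul_right, LinearMap.map_smul, hc, vv_smul_left]⟩ } with hK₂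
    have hcover : ∀ y, y ∈ K₁ ∨ y ∈ K₂ := by
      intro y
      by_cases hy : y = 0
      · exact Or.inl (hy ▸ K₁.zero_mem)
      rcases rowType hn0 hinj hr hy with ⟨w, hw, hB⟩ | ⟨w, hw, hB⟩
      · -- rows are R-type with right vector w : y ∈ K₂
        right
        obtain ⟨c₃, hc₃⟩ := hV y
        obtain ⟨c₄, hc₄⟩ := hB x₂
        have hc₃0 : c₃ ≠ 0 := by
          rintro rfl; rw [vv_zero_left] at hc₃
          exact MM2.Tvv_ne_zero hinj hx₂ hy hc₃
        obtain ⟨α, hα0, hα1, hα2⟩ := vv_eq_prop hc₃0 hv₂ (hc₃.symm.trans hc₄)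
        -- hα1 : c₄ = α • c₃, hα2 : v₂ = α • w
        obtain ⟨c₅, hc₅⟩ := hB x₁
        refine ⟨α⁻¹ • c₅, ?_⟩
        rw [hc₅, vv_smul_left, hα2, vv_smul_right, smul_smul,
          inv_mul_cancel₀ hα0, one_smul]
      · -- rows are L-type with left vector w : y ∈ K₁
        left
        obtain ⟨c₁, hc₁⟩ := hU y
        obtain ⟨c₂, hc₂⟩ := hB x₁
        have hc₁0 : c₁ ≠ 0 := by
          rintro rfl; rw [vv_zero_right] at hc₁
          exact MM2.Tvv_ne_zero hinj hx₁ hy hc₁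
        obtain ⟨α, hα0, hα1, hα2⟩ := vv_eq_prop hu₁ hc₁0 (hc₁.symm.trans hc₂)
        -- hα1 : w = α • u₁
        obtain ⟨c₆, hc₆⟩ := hB x₂
        refine ⟨α • c₆, ?_⟩
        rw [hc₆, hα1, vv_smul_left, ← vv_smul_right]
    rcases submodule_cover hcover with hK | hK
    · exact MM2.notBoth hn hinj hx₂ ⟨u₁, hu₁, fun a => hK a⟩ ⟨v₂, hv₂, hV⟩
    · exact MM2.notBoth hn hinj hx₁ ⟨u₁, hu₁, hU⟩ ⟨v₂, hv₂, fun a => hK a⟩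
end MM
namespace MM
variable {n : ℕ} {T : Mat n →ₗ[ℂ] Mat n}

lemma main_L (hn : 2 ≤ n) (hbij : Function.Bijective T)
    (hr : ∀ X : Mat n, X.rank = 1 → (T X).rank = 1)
    (hall : ∀ x : V n, x ≠ 0 → LT T x) :
    ∃ A B : Mat n, IsUnit A ∧ IsUnit B ∧ ∀ X, T X = A * X * B := by
  have hn0 : 0 < n := by omega
  have hinj := hbij.1
  set e0 : V n := Pi.single ⟨0, hn0⟩ 1 with he0def
  have he0 : e0 ≠ 0 := by
    intro h0; have := congrFun h0 ⟨0, hn0⟩; simp [he0def] at this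
  set e1 : V n := Pi.single ⟨1, hn⟩ 1 with he1def
  have he1 : e1 ≠ 0 := by
    intro h0; have := congrFun h0 ⟨1, hn⟩; simp [he1def] at this
  have hNPe : NP e0 e1 := by
    intro c hc
    have h0 := congrFun hc ⟨1, hn⟩
    simp [he0def, he1def, Pi.single_apply, Fin.ext_iff] at h0
  -- choose left vectors u x
  have hu' : ∀ x : V n, ∃ u, x ≠ 0 →
      (u ≠ 0 ∧ ∀ a, ∃ c, T (vecMulVec x a) = vecMulVec u c) := by
    intro x
    by_cases hx : x = 0
    · exact ⟨0, fun h => absurd hx h⟩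
    · obtain ⟨u, hu⟩ := hall x hx; exact ⟨u, fun _ => hu⟩
  choose u hu using hu'
  -- W2 : u preserves non-proportionality
  have W2 : ∀ x₁ x₂ : V n, x₁ ≠ 0 → x₂ ≠ 0 → NP x₁ x₂ → NP (u x₁) (u x₂) := by
    intro x₁ x₂ hx₁ hx₂ hNP c hc
    obtain ⟨hu₁, hU₁⟩ := hu x₁ hx₁
    obtain ⟨hu₂, hU₂⟩ := hu x₂ hx₂
    obtain ⟨F₁, hF₁⟩ := extract_right hu₁ (T ∘ₗ vvL x₁)
      (fun a => by simpa using hU₁ a)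
    obtain ⟨F₂, hF₂⟩ := extract_right hu₂ (T ∘ₗ vvL x₂)
      (fun a => by simpa using hU₂ a)
    simp only [LinearMap.comp_apply, vvL_apply] at hF₁ hF₂
    have hF₁inj : Function.Injective F₁ := by
      intro a b hab
      have h3 : T (vecMulVec x₁ a) = T (vecMulVec x₁ b) := by
        rw [hF₁ a, hF₁ b, hab]
      exact vv_cancel_left hx₁ (hinj h3)
    obtain ⟨a, ha⟩ := (LinearMap.injective_iff_surjective).1 hF₁inj (c • F₂ e0)
    have heq2 : vecMulVec x₁ a = vecMulVec x₂ e0 := by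
      apply hinj
      rw [hF₁ a, ha, vv_smul_right, hF₂ e0, hc, vv_smul_left]
    have ha0 : a ≠ 0 := by
      rintro rfl; rw [vv_zero_right] at heq2
      exact vv_ne_zero hx₂ he0 heq2.symm
    obtain ⟨α, hα0, hα1, hα2⟩ := vv_eq_prop hx₁ ha0 heq2
    exact hNP α hα1
  -- W3 : rows are sent to fixed right-vector spaces
  have W3 : ∀ y : V n, y ≠ 0 →
      ∃ v, v ≠ 0 ∧ ∀ b, ∃ c, T (vecMulVec b y) = vecMulVec c v := by
    intro y hy
    rcases rowType hn0 hinj hr hy with h | h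
    · exact h
    · exfalso
      obtain ⟨w, hw, hB⟩ := h
      have key : ∀ x : V n, x ≠ 0 → ∃ γ : ℂ, γ ≠ 0 ∧ w = γ • u x := by
        intro x hx
        obtain ⟨hux, hUx⟩ := hu x hx
        obtain ⟨c₁, hc₁⟩ := hUx y
        obtain ⟨c₂, hc₂⟩ := hB x
        have hc₁0 : c₁ ≠ 0 := by
          rintro rfl; rw [vv_zero_right] at hc₁
          exact MM2.Tvv_ne_zero hinj hx hy hc₁
        obtain ⟨γ, hγ0, hγ1, hγ2⟩ := vv_eq_prop hux hc₁0 (hc₁.symm.trans hc₂)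
        exact ⟨γ, hγ0, hγ1⟩
      obtain ⟨γ₀, hγ₀, hw0⟩ := key e0 he0
      obtain ⟨γ₁, hγ₁, hw1⟩ := key e1 he1
      apply W2 e0 e1 he0 he1 hNPe (γ₁⁻¹ * γ₀)
      -- from γ₀ • u e0 = γ₁ • u e1
      have h5 := hw0.symm.trans hw1
      funext i
      have h6 := congrFun h5 i
      simp only [Pi.smul_apply, smul_eq_mul] at h6 ⊢
      field_simp
      linear_combination -h6
  have hv' : ∀ y : V n, ∃ v, y ≠ 0 →
      (v ≠ 0 ∧ ∀ b, ∃ c, T (vecMulVec b y) = vecMulVec c v) := by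
    intro y
    by_cases hy : y = 0
    · exact ⟨0, fun h => absurd hy h⟩
    · obtain ⟨v, hv⟩ := W3 y hy; exact ⟨v, fun _ => hv⟩
  choose v hv using hv'
  obtain ⟨hve0, hV0⟩ := hv e0 he0
  obtain ⟨hue0, hU0⟩ := hu e0 he0
  -- global linear extractions
  obtain ⟨F, hF⟩ := extract_left hve0 (T ∘ₗ vvR e0) (fun a => by simpa using hV0 a)
  obtain ⟨G, hG⟩ := extract_right hue0 (T ∘ₗ vvL e0) (fun a => by simpa using hU0 a)
  simp only [LinearMap.comp_apply, vvR_apply, vvL_apply] at hF hG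
  have hFinj : Function.Injective F := by
    intro a b hab
    have h3 : T (vecMulVec a e0) = T (vecMulVec b e0) := by
      rw [hF a, hF b, hab]
    exact vv_cancel_right he0 (hinj h3)
  have hGinj : Function.Injective G := by
    intro a b hab
    have h3 : T (vecMulVec e0 a) = T (vecMulVec e0 b) := by
      rw [hG a, hG b, hab]
    exact vv_cancel_left he0 (hinj h3)
  -- scalar function μ
  have hμex : ∀ x y : V n, ∃ d : ℂ,
      T (vecMulVec x y) = d • vecMulVec (F x) (G y) ∧ (x ≠ 0 → y ≠ 0 → d ≠ 0) := by
    intro x y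
    by_cases hx : x = 0
    · exact ⟨0, by rw [hx, vv_zero_left, map_zero, zero_smul], fun h => absurd hx h⟩
    by_cases hy : y = 0
    · exact ⟨0, by rw [hy, vv_zero_right, map_zero, zero_smul], fun _ h => absurd hy h⟩
    obtain ⟨hux, hUx⟩ := hu x hx
    obtain ⟨hvy, hVy⟩ := hv y hy
    obtain ⟨c₀, hc₀⟩ := hUx e0
    have hc₀0 : c₀ ≠ 0 := by
      rintro rfl; rw [vv_zero_right] at hc₀
      exact MM2.Tvv_ne_zero hinj hx he0 hc₀
    obtain ⟨α, hα0, hα1, hα2⟩ := vv_eq_prop hux hc₀0 (hc₀.symm.trans (hF x))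
    -- hα1 : F x = α • u x
    have hGy0 : G y ≠ 0 := by
      intro h0
      apply MM2.Tvv_ne_zero hinj he0 hy
      rw [hG y, h0, vv_zero_right]
    obtain ⟨c₁, hc₁⟩ := hVy e0
    obtain ⟨β, hβ0, hβ1, hβ2⟩ := vv_eq_prop hue0 hGy0 ((hG y).symm.trans hc₁)
    -- hβ2 : G y = β • v y
    obtain ⟨c₂, hc₂⟩ := hUx y
    obtain ⟨c₃, hc₃⟩ := hVy x
    have hc₂0 : c₂ ≠ 0 := by
      rintro rfl; rw [vv_zero_right] at hc₂
      exact MM2.Tvv_ne_zero hinj hx hy hc₂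
    obtain ⟨γ, hγ0, hγ1, hγ2⟩ := vv_eq_prop hux hc₂0 (hc₂.symm.trans hc₃)
    -- hγ2 : c₂ = γ • v y
    refine ⟨γ / (α * β), ?_, fun _ _ => div_ne_zero hγ0 (mul_ne_zero hα0 hβ0)⟩
    rw [hc₂, hγ2, hα1, hβ2, vv_smul_right, vv_smul_left, vv_smul_right,
      smul_smul, smul_smul]
    congr 1
    field_simp
  choose μ hμ hμ0 using hμex
  -- constancy of μ
  have hμT : ∀ y x : V n, (τ ∘ₗ T ∘ₗ τ : Mat n →ₗ[ℂ] Mat n) (vecMulVec y x)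
      = μ x y • vecMulVec (G y) (F x) := by
    intro y x
    have h3 : (τ ∘ₗ T ∘ₗ τ : Mat n →ₗ[ℂ] Mat n) (vecMulVec y x)
        = (T (vecMulVec x y))ᵀ := by
      simp only [LinearMap.comp_apply, τ_apply, vv_transpose]
    rw [h3, hμ x y, Matrix.transpose_smul, vv_transpose]
  have hconst : ∀ x y : V n, x ≠ 0 → y ≠ 0 → μ x y = μ e0 e0 := by
    intro x y hx hy
    have h1 : μ x y = μ e0 y := const_first hFinj hGinj μ hμ hx he0 hy
    have h2 : μ e0 y = μ e0 e0 :=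
      const_first hGinj hFinj (fun a b => μ b a) hμT hy he0 he0
    rw [h1, h2]
  have hlam : μ e0 e0 ≠ 0 := hμ0 e0 e0 he0 he0
  have hfull : ∀ x y : V n,
      T (vecMulVec x y) = μ e0 e0 • vecMulVec (F x) (G y) := by
    intro x y
    by_cases hx : x = 0
    · rw [hx, vv_zero_left, map_zero, map_zero, vv_zero_left, smul_zero]
    by_cases hy : y = 0
    · rw [hy, vv_zero_right, map_zero, map_zero, vv_zero_right, smul_zero]
    rw [hμ x y, hconst x y hx hy]
  -- matrices
  set A : Mat n := LinearMap.toMatrix' F with hA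
  set C : Mat n := LinearMap.toMatrix' G with hC
  have hAmul : ∀ x, A.mulVec x = F x := fun x => by
    rw [hA, ← Matrix.toLin'_apply, Matrix.toLin'_toMatrix']
  have hCmul : ∀ x, C.mulVec x = G x := fun x => by
    rw [hC, ← Matrix.toLin'_apply, Matrix.toLin'_toMatrix']
  have hkey : ∀ x y : V n,
      T (vecMulVec x y) = (μ e0 e0 • A) * vecMulVec x y * Cᵀ := by
    intro x y
    rw [hfull, ← hAmul, ← hCmul, vv_conj, Matrix.smul_mul, Matrix.smul_mul]
  set S : Mat n →ₗ[ℂ] Mat n :=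
    { toFun := fun X => (μ e0 e0 • A) * X * Cᵀ
      map_add' := fun X Y => by rw [Matrix.mul_add, Matrix.add_mul]
      map_smul' := fun r X => by
        rw [RingHom.id_apply, Matrix.mul_smul, Matrix.smul_mul] } with hS
  have hTS : T = S := by
    apply Module.Basis.ext (Matrix.stdBasis ℂ (Fin n) (Fin n))
    rintro ⟨i, j⟩
    rw [Matrix.stdBasis_eq_single,
      Matrix.single_eq_single_vecMulVec_single]
    exact hkey _ _
  -- units
  have hAunit : IsUnit A := by
    rw [← Matrix.mulVec_injective_iff_isUnit]
    have : A.mulVec = F := funext hAmul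
    rw [this]; exact hFinj
  have hCunit : IsUnit C := by
    rw [← Matrix.mulVec_injective_iff_isUnit]
    have : C.mulVec = G := funext hCmul
    rw [this]; exact hGinj
  have hlamA : IsUnit (μ e0 e0 • A) := by
    have h1 : IsUnit (μ e0 e0 • (1 : Mat n)) := by
      rw [Matrix.isUnit_iff_isUnit_det]
      simp only [Matrix.det_smul, Matrix.det_one, mul_one]
      exact (pow_ne_zero _ hlam).isUnit
    have h2 : μ e0 e0 • A = (μ e0 e0 • (1 : Mat n)) * A := by
      rw [Matrix.smul_mul, one_mul]
    rw [h2]; exact h1.mul hAunit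
  have hCt : IsUnit Cᵀ := by
    rw [Matrix.isUnit_iff_isUnit_det, Matrix.det_transpose,
      ← Matrix.isUnit_iff_isUnit_det]
    exact hCunit
  exact ⟨_, _, hlamA, hCt, fun X => by rw [hTS]; rfl⟩
end MM
open MM in
theorem stmt3 {n : ℕ}
    (T : Matrix (Fin n) (Fin n) ℂ →ₗ[ℂ] Matrix (Fin n) (Fin n) ℂ)
    (hT : Function.Bijective T)
    (hrank : ∀ X : Matrix (Fin n) (Fin n) ℂ, X.rank = 1 → (T X).rank = 1) :
    ∃ A B : Matrix (Fin n) (Fin n) ℂ, IsUnit A ∧ IsUnit B ∧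
      ((∀ X, T X = A * X * B) ∨ (∀ X, T X = A * Xᵀ * B)) := by
  rcases Nat.lt_or_ge n 2 with hsmall | hn
  · interval_cases n
    · -- n = 0
      refine ⟨1, 1, isUnit_one, isUnit_one, Or.inl fun X => ?_⟩
      ext i j
      exact i.elim0
    · -- n = 1
      have hrankE : (1 : Mat 1).rank = 1 := by
        rw [Matrix.rank_one]; simp
      have h1 : (T 1).rank = 1 := hrank 1 hrankE
      have hT1 : T 1 ≠ 0 := by intro h0; rw [h0] at h1; simp at h1
      have hc : T 1 0 0 ≠ 0 := by
        intro h0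
        apply hT1
        ext i j
        have hi : i = 0 := Fin.ext (Nat.lt_one_iff.1 i.isLt)
        have hj : j = 0 := Fin.ext (Nat.lt_one_iff.1 j.isLt)
        subst hi; subst hj
        simpa using h0
      refine ⟨T 1, 1, ?_, isUnit_one, Or.inl fun X => ?_⟩
      · rw [Matrix.isUnit_iff_isUnit_det, Matrix.det_fin_one]
        exact hc.isUnit
      · have hX : X = X 0 0 • (1 : Mat 1) := by
          ext i j
          have hi : i = 0 := Fin.ext (Nat.lt_one_iff.1 i.isLt)
          have hj : j = 0 := Fin.ext (Nat.lt_one_iff.1 j.isLt)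
          subst hi; subst hj
          simp
        have h2 : T X = X 0 0 • T 1 := by
          conv_lhs => rw [hX]
          rw [LinearMap.map_smul]
        rw [mul_one, h2]
        ext i j
        rw [Matrix.mul_apply, Fin.sum_univ_one]
        have hi : i = 0 := Fin.ext (Nat.lt_one_iff.1 i.isLt)
        have hj : j = 0 := Fin.ext (Nat.lt_one_iff.1 j.isLt)
        subst hi; subst hj
        simp [mul_comm]
  · -- n ≥ 2
    have hinj := hT.1
    by_cases hall : ∀ x : V n, x ≠ 0 → LT T x
    · obtain ⟨A, B, hA, hB, h⟩ := main_L hn hT hrank hall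
      exact ⟨A, B, hA, hB, Or.inl h⟩
    · push_neg at hall
      obtain ⟨x₀, hx₀, hLx₀⟩ := hall
      have hRx₀ : RT T x₀ := by
        rcases MM2.lemB (show 0 < n by omega) hinj hrank hx₀ with h | h
        · exact absurd h hLx₀
        · exact h
      have hallR : ∀ x : V n, x ≠ 0 → RT T x := by
        intro x hx
        rcases MM2.lemB (show 0 < n by omega) hinj hrank hx with h | h
        · exact (consistency hn hinj hrank hx hx₀ h hRx₀).elim
        · exact h
      have hbij' : Function.Bijective (τ ∘ₗ T : Mat n →ₗ[ℂ] Mat n) := by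
        have hτ : Function.Bijective (τ : Mat n →ₗ[ℂ] Mat n) :=
          Function.Involutive.bijective (fun X => Matrix.transpose_transpose X)
        exact hτ.comp hT
      have hr' : ∀ X : Mat n, X.rank = 1 → rank ((τ ∘ₗ T : Mat n →ₗ[ℂ] Mat n) X) = 1 := by
        intro X hX
        simp only [LinearMap.comp_apply, τ_apply]
        rw [Matrix.rank_transpose]
        exact hrank X hX
      have hall' : ∀ x : V n, x ≠ 0 → LT (τ ∘ₗ T) x := by
        intro x hx
        obtain ⟨v, hv, hV⟩ := hallR x hx
        refine ⟨v, hv, fun a => ?_⟩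
        obtain ⟨c, hc⟩ := hV a
        refine ⟨c, ?_⟩
        simp only [LinearMap.comp_apply, τ_apply]
        rw [hc, vv_transpose]
      obtain ⟨A, B, hA, hB, h⟩ := main_L hn hbij' hr' hall'
      refine ⟨Bᵀ, Aᵀ, ?_, ?_, Or.inr fun X => ?_⟩
      · rw [Matrix.isUnit_iff_isUnit_det, Matrix.det_transpose,
          ← Matrix.isUnit_iff_isUnit_det]
        exact hB
      · rw [Matrix.isUnit_iff_isUnit_det, Matrix.det_transpose,
          ← Matrix.isUnit_iff_isUnit_det]
        exact hA
      · have h6 := h X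
        simp only [LinearMap.comp_apply, τ_apply] at h6
        have h7 := congrArg Matrix.transpose h6
        rwa [Matrix.transpose_transpose, Matrix.transpose_mul,
          Matrix.transpose_mul, ← Matrix.mul_assoc] at h7
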